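/- arXiv:2504.14057 — 2 statements merged into one kernel-verified Lean document; each statement's English description precedes it below -/
import Mathlib

section
/- Let H be a Hilbert space and H1, H2, H3 closed subspaces with H2 ⊆ H1 ∩ H3. Then p1 ∘ p3 = p2 if and only if the subspaces H1 ∩ H2^⊥ and H3 ∩ H2^⊥ are orthogonal. -/
/-- The orthogonal projection onto a closed subspace, as an operator `H →L[ℂ] H`. -/
noncomputable def orthProj {H : Type*} [NormedAddCommGroup H] [InnerProductSpace ℂ H]
    [CompleteSpace H] (K : Submodule ℂ H) (hK : IsClosed (K : Set H)) : H →L[ℂ] H :=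
  haveI : CompleteSpace K := hK.completeSpace_coe
  K.subtypeL.comp K.orthogonalProjectionOnto

section aux

variable {H : Type*} [NormedAddCommGroup H] [InnerProductSpace ℂ H] [CompleteSpace H]
  (K : Submodule ℂ H) (hK : IsClosed (K : Set H))

lemma orthProj_mem (x : H) : orthProj K hK x ∈ K := by
  haveI : CompleteSpace K := hK.completeSpace_coe
  exact (K.orthogonalProjectionOnto x).2

lemma orthProj_eq_self {x : H} (hx : x ∈ K) : orthProj K hK x = x := by
  haveI : CompleteSpace K := hK.completeSpace_coe
  exact (Submodule.starProjection_eq_self_iff (K := K)).mpr hx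

lemma orthProj_inner (u v : H) :
    (inner ℂ (orthProj K hK u) v : ℂ) = inner ℂ u (orthProj K hK v) := by
  haveI : CompleteSpace K := hK.completeSpace_coe
  exact Submodule.inner_starProjection_left_eq_right (K := K) u v

lemma sub_orthProj_mem_orthogonal (x : H) : x - orthProj K hK x ∈ Kᗮ := by
  haveI : CompleteSpace K := hK.completeSpace_coe
  exact Submodule.sub_starProjection_mem_orthogonal (K := K) x

end aux

/-- For closed subspaces with `H₂ ⊆ H₁ ∩ H₃`, one has `p₁ ∘ p₃ = p₂` iff the subspaces
`H₁ ∩ H₂ᗮ` and `H₃ ∩ H₂ᗮ` are orthogonal. -/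
theorem proj_comp_eq_iff_orthogonal
    {H : Type*} [NormedAddCommGroup H] [InnerProductSpace ℂ H] [CompleteSpace H]
    (H1 H2 H3 : Submodule ℂ H)
    (h1 : IsClosed (H1 : Set H)) (h2 : IsClosed (H2 : Set H)) (h3 : IsClosed (H3 : Set H))
    (hle : H2 ≤ H1 ⊓ H3) :
    (orthProj H1 h1).comp (orthProj H3 h3) = orthProj H2 h2 ↔
      ∀ x ∈ H1 ⊓ H2ᗮ, ∀ y ∈ H3 ⊓ H2ᗮ, (inner ℂ x y : ℂ) = 0 := by
  set p1 := orthProj H1 h1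
  set p2 := orthProj H2 h2
  set p3 := orthProj H3 h3
  have h21 : H2 ≤ H1 := fun x hx => (hle hx).1
  have h23 : H2 ≤ H3 := fun x hx => (hle hx).2
  constructor
  · intro h x hx y hy
    obtain ⟨hx1, hx2⟩ := hx
    obtain ⟨hy3, hy2⟩ := hy
    have key : p1 (p3 y) = p2 y := by
      have := ContinuousLinearMap.ext_iff.mp h y
      simpa using this
    calc (inner ℂ x y : ℂ) = inner ℂ (p1 x) (p3 y) := by
          rw [orthProj_eq_self H1 h1 hx1, orthProj_eq_self H3 h3 hy3]
      _ = inner ℂ x (p1 (p3 y)) := orthProj_inner H1 h1 x (p3 y)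
      _ = inner ℂ x (p2 y) := by rw [key]
      _ = 0 := (Submodule.mem_orthogonal' H2 x).mp hx2 _ (orthProj_mem H2 h2 y)
  · intro h
    ext z
    show p1 (p3 z) = p2 z
    set w := z - p2 z with hw
    have hw2 : w ∈ H2ᗮ := sub_orthProj_mem_orthogonal H2 h2 z
    -- p3 w ∈ H2ᗮ
    have hp3w2 : p3 w ∈ H2ᗮ := by
      intro u hu
      have : (inner ℂ (p3 u) w : ℂ) = inner ℂ u (p3 w) := orthProj_inner H3 h3 u w
      rw [orthProj_eq_self H3 h3 (h23 hu)] at this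
      rw [← this]
      exact hw2 u hu
    -- p1 (p3 w) ∈ H2ᗮ
    have hq2 : p1 (p3 w) ∈ H2ᗮ := by
      intro u hu
      have : (inner ℂ (p1 u) (p3 w) : ℂ) = inner ℂ u (p1 (p3 w)) :=
        orthProj_inner H1 h1 u (p3 w)
      rw [orthProj_eq_self H1 h1 (h21 hu)] at this
      rw [← this]
      exact hp3w2 u hu
    -- key: p1 (p3 w) = 0
    have hzero : p1 (p3 w) = 0 := by
      have horth : (inner ℂ (p1 (p3 w)) (p3 w) : ℂ) = 0 :=
        h _ ⟨orthProj_mem H1 h1 _, hq2⟩ _ ⟨orthProj_mem H3 h3 _, hp3w2⟩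
      have hself : (inner ℂ (p1 (p3 w)) (p1 (p3 w)) : ℂ) = 0 := by
        have := orthProj_inner H1 h1 (p3 w) (p1 (p3 w))
        rw [orthProj_eq_self H1 h1 (orthProj_mem H1 h1 (p3 w))] at this
        rw [this, ← inner_conj_symm, horth, map_zero]
      exact inner_self_eq_zero.mp hself
    have hz : z = p2 z + w := by rw [hw]; abel
    calc p1 (p3 z) = p1 (p3 (p2 z + w)) := by rw [← hz]
      _ = p1 (p3 (p2 z)) + p1 (p3 w) := by rw [map_add, map_add]
      _ = p1 (p2 z) := by
          rw [orthProj_eq_self H3 h3 (h23 (orthProj_mem H2 h2 z)), hzero, add_zero]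
      _ = p2 z := orthProj_eq_self H1 h1 (h21 (orthProj_mem H2 h2 z))
end

section
/- Let H be a Hilbert space, (B_n) an increasing sequence of closed subspaces whose union is dense in H, and (C_n) a decreasing sequence of closed subspaces with intersection T. Suppose that for each n the composition p_{C_n} ∘ p_{B_n} equals a fixed orthogonal projection p_A. Then p_T = p_A. -/
theorem orthProj_apply {H : Type*} [NormedAddCommGroup H] [InnerProductSpace ℂ H]
    [CompleteSpace H] (K : Submodule ℂ H) (hK : IsClosed (K : Set H)) (x : H) :
    haveI : CompleteSpace K := hK.completeSpace_coe
    orthProj K hK x = (K.orthogonalProjectionOnto x : H) := rfl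

/-- If `(B n)` is an increasing sequence of closed subspaces with dense union, `(C n)` a
decreasing sequence of closed subspaces with intersection `T`, and `p_{C n} ∘ p_{B n} = p_A`
for every `n`, then `p_T = p_A`. -/
theorem proj_inf_eq_of_comp_eq
    {H : Type*} [NormedAddCommGroup H] [InnerProductSpace ℂ H] [CompleteSpace H]
    (B C : ℕ → Submodule ℂ H) (A : Submodule ℂ H)
    (hBcl : ∀ n, IsClosed ((B n : Set H))) (hCcl : ∀ n, IsClosed ((C n : Set H)))
    (hA : IsClosed (A : Set H))
    (hBmono : ∀ n, B n ≤ B (n + 1))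
    (hBdense : Dense (⋃ n, (B n : Set H)))
    (hCmono : ∀ n, C (n + 1) ≤ C n)
    (hTcl : IsClosed ((⨅ n, C n : Submodule ℂ H) : Set H))
    (hcomp : ∀ n, (orthProj (C n) (hCcl n)).comp (orthProj (B n) (hBcl n)) = orthProj A hA) :
    orthProj (⨅ n, C n) hTcl = orthProj A hA := by
  haveI : ∀ n, CompleteSpace (B n) := fun n => (hBcl n).completeSpace_coe
  haveI : ∀ n, CompleteSpace (C n) := fun n => (hCcl n).completeSpace_coe
  haveI : CompleteSpace A := hA.completeSpace_coe
  have key : (⨅ n, C n) = A := by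
    apply le_antisymm
    · -- T ≤ A
      intro x hx
      have hxC : ∀ n, x ∈ C n := fun n => (Submodule.mem_iInf C).mp hx n
      -- p_A x = lim p_{C n} (p_{B n} x)
      have hBtend : Filter.Tendsto (fun n => (Submodule.orthogonalProjectionOnto (B n) x : H))
          Filter.atTop (nhds x) := by
        refine Submodule.starProjection_tendsto_self B (monotone_nat_of_le_succ hBmono) x ?_
        intro y _
        have hd : Dense ((⨆ n, B n : Submodule ℂ H) : Set H) := by
          refine hBdense.mono ?_
          exact Set.iUnion_subset fun n => fun z hz => le_iSup B n hz
        rw [← SetLike.mem_coe, Submodule.topologicalClosure_coe]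
        rw [hd.closure_eq]
        trivial
      have : orthProj A hA x = x := by
        have heq : ∀ n, ‖orthProj A hA x - x‖ ≤ ‖(Submodule.orthogonalProjectionOnto (B n) x : H) - x‖ := by
          intro n
          have h1 : orthProj A hA x = (Submodule.orthogonalProjectionOnto (C n)
              ((Submodule.orthogonalProjectionOnto (B n) x : H)) : H) := by
            rw [← hcomp n]; rfl
          have h2 : x = (Submodule.orthogonalProjectionOnto (C n) x : H) :=
            (Submodule.starProjection_eq_self_iff (K := C n) |>.mpr (hxC n)).symm
          have h3 : ‖(Submodule.orthogonalProjectionOnto (C n) ((Submodule.orthogonalProjectionOnto (B n) x : H) - x) : H)‖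
              ≤ ‖(Submodule.orthogonalProjectionOnto (B n) x : H) - x‖ := by
            refine le_trans ((Submodule.orthogonalProjectionOnto (C n)).le_opNorm _) ?_
            exact mul_le_of_le_one_left (norm_nonneg _) (Submodule.orthogonalProjectionOnto_norm_le _)
          have h4 : (Submodule.orthogonalProjectionOnto (C n) ((Submodule.orthogonalProjectionOnto (B n) x : H) - x) : H)
              = orthProj A hA x - x := by
            rw [map_sub]; push_cast; rw [← h1, ← h2]
          rw [← h4]
          exact h3
        have h0 : Filter.Tendsto (fun n => ‖(Submodule.orthogonalProjectionOnto (B n) x : H) - x‖)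
            Filter.atTop (nhds 0) := by
          have := (hBtend.sub (tendsto_const_nhds (x := x))).norm
          simpa using this
        have hle : ‖orthProj A hA x - x‖ ≤ 0 := ge_of_tendsto' h0 heq
        have : ‖orthProj A hA x - x‖ = 0 := le_antisymm hle (norm_nonneg _)
        rw [norm_eq_zero, sub_eq_zero] at this
        exact this
      rw [orthProj_apply] at this
      exact (Submodule.starProjection_eq_self_iff (K := A)).mp this
    · -- A ≤ T
      intro x hx
      rw [Submodule.mem_iInf]
      intro n
      have : orthProj A hA x = x := by
        rw [orthProj_apply]
        exact (Submodule.starProjection_eq_self_iff (K := A)).mpr hx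
      rw [← hcomp n] at this
      rw [← this]
      exact Submodule.coe_mem _
  subst key
  rfl
end
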